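/- Let E be an (m+n)×(m+n) Hermitian matrix, Y ∈ ℂ^{p×(m+n)}, Z ∈ ℂ^{q×(m+n)}, and ζ > 0. If there exists ς ≥ 0 such that the block matrix [[E − ς·ZᴴZ, −ζ·Yᴴ], [−ζ·Y, ς·I_p]] is positive semidefinite, then E ⪰ YᴴXZ + ZᴴXᴴY for every X ∈ ℂ^{p×q} with ‖X‖_F ≤ ζ. -/

import Mathlib

open ComplexOrder Matrix

-- Cauchy–Schwarz per row, summed
lemma cs_aux {p q : ℕ} (X : Matrix (Fin p) (Fin q) ℂ) (u : Fin q → ℂ) :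
    ∑ i, Complex.normSq ((X *ᵥ u) i) ≤
      (∑ i, ∑ j, ‖X i j‖ ^ 2) * ∑ j, Complex.normSq (u j) := by
  rw [Finset.sum_mul]
  apply Finset.sum_le_sum
  intro i _
  set a : EuclideanSpace ℂ (Fin q) := WithLp.toLp 2 (fun j => star (X i j)) with ha
  set b : EuclideanSpace ℂ (Fin q) := WithLp.toLp 2 u with hb
  have hinner : (inner ℂ a b : ℂ) = (X *ᵥ u) i := by
    simp [PiLp.inner_apply, RCLike.inner_apply, ha, hb, mulVec, dotProduct, mul_comm]
  have h := norm_inner_le_norm (𝕜 := ℂ) a b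
  have h2 : ‖(inner ℂ a b : ℂ)‖ ^ 2 ≤ (‖a‖ * ‖b‖) ^ 2 := by
    apply pow_le_pow_left₀ (norm_nonneg _) h
  have hna : ‖a‖ ^ 2 = ∑ j, ‖X i j‖ ^ 2 := by
    rw [EuclideanSpace.norm_eq, Real.sq_sqrt (by positivity)]
    simp [ha]
  have hnb : ‖b‖ ^ 2 = ∑ j, Complex.normSq (u j) := by
    rw [EuclideanSpace.norm_eq, Real.sq_sqrt (by positivity)]
    simp [hb, Complex.normSq_eq_norm_sq]
  calc Complex.normSq ((X *ᵥ u) i) = ‖(inner ℂ a b : ℂ)‖ ^ 2 := by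
        rw [hinner]; simp [Complex.normSq_eq_norm_sq]
    _ ≤ (‖a‖ * ‖b‖) ^ 2 := h2
    _ = (∑ j, ‖X i j‖ ^ 2) * ∑ j, Complex.normSq (u j) := by
        rw [mul_pow, hna, hnb]

lemma stardot {n : ℕ} (t : Fin n → ℂ) :
    star t ⬝ᵥ t = ((∑ i, Complex.normSq (t i) : ℝ) : ℂ) := by
  simp [dotProduct, Complex.normSq_eq_conj_mul_self]

theorem stmt16 {d p q : ℕ} (E : Matrix (Fin d) (Fin d) ℂ) (hE : E.IsHermitian)
    (Y : Matrix (Fin p) (Fin d) ℂ) (Z : Matrix (Fin q) (Fin d) ℂ)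
    (ζ ς : ℝ) (hζ : 0 < ζ) (hς : 0 ≤ ς)
    (hLMI : (Matrix.fromBlocks (E - ς • (Zᴴ * Z)) (-(ζ • Yᴴ)) (-(ζ • Y))
        (ς • (1 : Matrix (Fin p) (Fin p) ℂ))).PosSemidef) :
    ∀ X : Matrix (Fin p) (Fin q) ℂ,
      Real.sqrt (∑ i, ∑ j, ‖X i j‖ ^ 2) ≤ ζ →
        (E - (Yᴴ * X * Z + Zᴴ * Xᴴ * Y)).PosSemidef := by
  intro X hX
  have hF2 : (∑ i, ∑ j, ‖X i j‖ ^ 2) ≤ ζ ^ 2 := by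
    have h0 : (0:ℝ) ≤ ∑ i, ∑ j, ‖X i j‖ ^ 2 := by positivity
    nlinarith [Real.sq_sqrt h0, Real.sqrt_nonneg (∑ i, ∑ j, ‖X i j‖ ^ 2)]
  rw [Matrix.posSemidef_iff_dotProduct_mulVec] at hLMI ⊢
  constructor
  · refine hE.sub ?_
    unfold Matrix.IsHermitian
    simp [conjTranspose_add, conjTranspose_mul, Matrix.mul_assoc, add_comm]
  intro v
  set u : Fin q → ℂ := Z *ᵥ v with hu
  set w : Fin p → ℂ := (ζ:ℂ)⁻¹ • (X *ᵥ u) with hw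
  have key := hLMI.2 (Sum.elim v w)
  set N1 : ℝ := ∑ j, Complex.normSq (u j) with hN1
  set N2 : ℝ := ∑ i, Complex.normSq ((X *ᵥ u) i) with hN2
  have hN : N2 ≤ ζ ^ 2 * N1 := by
    calc N2 ≤ (∑ i, ∑ j, ‖X i j‖ ^ 2) * N1 := cs_aux X u
      _ ≤ ζ ^ 2 * N1 := by
        apply mul_le_mul_of_nonneg_right hF2
        exact Finset.sum_nonneg fun _ _ => Complex.normSq_nonneg _
  have hζ' : (ζ:ℂ) ≠ 0 := by exact_mod_cast hζ.ne'
  have expand : star (Sum.elim v w) ⬝ᵥ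
      ((Matrix.fromBlocks (E - ς • (Zᴴ * Z)) (-(ζ • Yᴴ)) (-(ζ • Y))
        (ς • (1 : Matrix (Fin p) (Fin p) ℂ))) *ᵥ Sum.elim v w)
      = star v ⬝ᵥ ((E - (Yᴴ * X * Z + Zᴴ * Xᴴ * Y)) *ᵥ v)
        - ((ς * (N1 - (ζ^2)⁻¹ * N2) : ℝ) : ℂ) := by
    have hZZ : star v ⬝ᵥ ((Zᴴ * Z) *ᵥ v) = ((N1 : ℝ) : ℂ) := by
      rw [← mulVec_mulVec, dotProduct_mulVec, ← star_mulVec, ← hu, stardot u, hN1]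
    have hXu : star (X *ᵥ u) ⬝ᵥ (X *ᵥ u) = ((N2 : ℝ) : ℂ) := by
      rw [stardot, hN2]
    have e1 : star v ⬝ᵥ ((ζ • Yᴴ) *ᵥ w) = star v ⬝ᵥ ((Yᴴ * X * Z) *ᵥ v) := by
      rw [hw, smul_mulVec, mulVec_smul, dotProduct_smul, dotProduct_smul,
        Complex.real_smul, smul_eq_mul, ← mul_assoc, mul_inv_cancel₀ hζ', one_mul,
        mulVec_mulVec, mulVec_mulVec]
    have e2 : star w ⬝ᵥ ((ζ • Y) *ᵥ v) = star v ⬝ᵥ ((Zᴴ * Xᴴ * Y) *ᵥ v) := by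
      rw [hw, star_smul, smul_dotProduct, smul_mulVec, dotProduct_smul,
        star_inv₀, Complex.star_def, Complex.conj_ofReal]
      rw [star_mulVec, ← dotProduct_mulVec, hu, star_mulVec, ← dotProduct_mulVec,
        mulVec_mulVec, mulVec_mulVec]
      simp [Complex.real_smul, smul_eq_mul, ← mul_assoc, inv_mul_cancel₀ hζ']
    have e3 : star w ⬝ᵥ ((ς • (1 : Matrix (Fin p) (Fin p) ℂ)) *ᵥ w)
        = ((ς * (ζ^2)⁻¹ * N2 : ℝ) : ℂ) := by
      rw [hw, smul_mulVec, one_mulVec, star_smul, smul_dotProduct,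
        dotProduct_smul, dotProduct_smul, hXu, star_inv₀, Complex.star_def,
        Complex.conj_ofReal]
      simp only [Complex.real_smul, smul_eq_mul]
      push_cast
      ring
    have e0 : star v ⬝ᵥ ((ς • (Zᴴ * Z)) *ᵥ v) = ((ς * N1 : ℝ) : ℂ) := by
      rw [smul_mulVec, dotProduct_smul, hZZ, Complex.real_smul]
      push_cast; ring
    simp only [Function.star_sumElim, fromBlocks_mulVec, sumElim_dotProduct_sumElim,
      Sum.elim_comp_inl, Sum.elim_comp_inr, sub_mulVec, add_mulVec, neg_mulVec,
      dotProduct_add, dotProduct_sub, dotProduct_neg, e0, e1, e2, e3]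
    push_cast
    ring
  rw [expand] at key
  have hnn : (0:ℂ) ≤ ((ς * (N1 - (ζ^2)⁻¹ * N2) : ℝ) : ℂ) := by
    rw [Complex.zero_le_real]
    apply mul_nonneg hς
    rw [sub_nonneg, inv_mul_le_iff₀ (by positivity)]
    linarith [hN]
  have h := add_nonneg key hnn
  rwa [sub_add_cancel] at h
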